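/- If (Q_1, Q_2) is a 2-colouring of the hypergraph (Q, S), then the sets W(p_1) = {v}, W(p_2) = {q*, u_1, u_2}, W(p_3) = {S_1,...,S_n} ∪ Q_1 ∪ Q', W(p_4) = {S_1',...,S_n'} ∪ Q_2 and W(p_5) = {w} form a P_5-witness structure of the graph G = G(Q,S). -/

import Mathlib

/-- `W` is an `H`-witness structure of `G`: a family of pairwise disjoint nonempty
connected subsets of `V(G)` covering `V(G)` such that distinct `h₁ h₂` are adjacent in `H`
iff there is an edge of `G` between `W h₁` and `W h₂`. -/
def IsWitnessStructure {V U : Type*} (G : SimpleGraph V) (H : SimpleGraph U)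
    (W : U → Set V) : Prop :=
  (∀ h, (W h).Nonempty) ∧
  (∀ h₁ h₂, h₁ ≠ h₂ → Disjoint (W h₁) (W h₂)) ∧
  (⋃ h, W h) = Set.univ ∧
  (∀ h, (G.induce (W h)).Connected) ∧
  (∀ h₁ h₂, h₁ ≠ h₂ → ((∃ a ∈ W h₁, ∃ b ∈ W h₂, G.Adj a b) ↔ H.Adj h₁ h₂))

/-- `G` contains `H` as a contraction. -/
def ContainsAsContraction {V U : Type*} (G : SimpleGraph V) (H : SimpleGraph U) : Prop :=
  ∃ W : U → Set V, IsWitnessStructure G H W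

/-- Raw vertex names for the graph `G(Q,S)`: elements `q_i`, hyperedges `S_j`,
copies `S_j'`, subdivision vertices `q^i_j`, and special vertices `q*`, `u₁`, `u₂`, `v`, `w`. -/
inductive HVertex (m n : ℕ) : Type
  | elt : Fin m → HVertex m n
  | hyp : Fin n → HVertex m n
  | copy : Fin n → HVertex m n
  | sub : Fin m → Fin n → HVertex m n
  | qstar : HVertex m n
  | u1 : HVertex m n
  | u2 : HVertex m n
  | v : HVertex m n
  | w : HVertex m n

/-- A raw vertex name is an actual vertex of `G(Q,S)`: the subdivision vertex `q^i_j`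
exists only when `q_i ∈ S_j`. -/
def HVertex.OK {m n : ℕ} (S : Fin n → Set (Fin m)) : HVertex m n → Prop
  | .sub i j => i ∈ S j
  | _ => True

/-- The vertex set of `G(Q,S)`. -/
def GVertex {m n : ℕ} (S : Fin n → Set (Fin m)) : Type := {x : HVertex m n // x.OK S}

/-- The (asymmetrically listed) edges of `G(Q,S)`:
`q^i_j q_i`, `q^i_j S_j`, `q_i S_j'` (for `q_i ∈ S_j`), `S_j S_k'` (all `j,k`),
`q* u₁`, `q* u₂`, `q* q^i_j`, `u₁ S_j`, `u₂ S_j`, `u₁ v`, `u₂ v`, `w S_j'`. -/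
def baseAdj {m n : ℕ} (S : Fin n → Set (Fin m)) : HVertex m n → HVertex m n → Prop
  | .sub i _, .elt i' => i = i'
  | .sub _ j, .hyp j' => j = j'
  | .elt i, .copy j => i ∈ S j
  | .hyp _, .copy _ => True
  | .qstar, .u1 => True
  | .qstar, .u2 => True
  | .qstar, .sub _ _ => True
  | .u1, .hyp _ => True
  | .u2, .hyp _ => True
  | .u1, .v => True
  | .u2, .v => True
  | .w, .copy _ => True
  | _, _ => False

/-- The graph `G = G(Q,S)`. -/
def GQS {m n : ℕ} (S : Fin n → Set (Fin m)) : SimpleGraph (GVertex S) :=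
  SimpleGraph.fromRel (fun a b => baseAdj S a.1 b.1)

/-- `(Q₁, Q₂)` is a 2-colouring of the hypergraph `(Q, S)`: a partition of `Q` such that
every hyperedge meets both parts. -/
def IsTwoColouring {m n : ℕ} (S : Fin n → Set (Fin m)) (Q₁ Q₂ : Set (Fin m)) : Prop :=
  Q₁ ∪ Q₂ = Set.univ ∧ Disjoint Q₁ Q₂ ∧ ∀ j, (Q₁ ∩ S j).Nonempty ∧ (Q₂ ∩ S j).Nonempty


section Helpers
variable {m n : ℕ} {S : Fin n → Set (Fin m)}

lemma gadj {a b : GVertex S} (hne : a.1 ≠ b.1)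
    (h : baseAdj S a.1 b.1 ∨ baseAdj S b.1 a.1) : (GQS S).Adj a b :=
  ⟨fun e => hne (congrArg Subtype.val e), h⟩

lemma gadj_elim {a b : GVertex S} (h : (GQS S).Adj a b) :
    baseAdj S a.1 b.1 ∨ baseAdj S b.1 a.1 := h.2

lemma iadj {s : Set (GVertex S)} {a b : ↥s} (hne : a.1.1 ≠ b.1.1)
    (h : baseAdj S a.1.1 b.1.1 ∨ baseAdj S b.1.1 a.1.1) : ((GQS S).induce s).Adj a b :=
  gadj (a := a.1) (b := b.1) hne h

lemma connected_hub {V : Type*} (G : SimpleGraph V) (s : Set V) (hub : ↥s)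
    (h : ∀ z : ↥s, (G.induce s).Reachable z hub) : (G.induce s).Connected := by
  haveI : Nonempty ↥s := ⟨hub⟩
  exact SimpleGraph.Connected.mk fun a b => (h a).trans (h b).symm

end Helpers

set_option maxHeartbeats 1000000 in
theorem stmt_9 {m n : ℕ} (S : Fin n → Set (Fin m)) (hn : 2 ≤ n)
    (hSne : ∀ j, (S j).Nonempty) (hSlast : S ⟨n - 1, by omega⟩ = Set.univ) (Q₁ Q₂ : Set (Fin m)) (hcol : IsTwoColouring S Q₁ Q₂) :
    IsWitnessStructure (GQS S) (SimpleGraph.pathGraph 5)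
      ![ {(⟨.v, trivial⟩ : GVertex S)},
         {z : GVertex S | z.1 = .qstar ∨ z.1 = .u1 ∨ z.1 = .u2},
         {z : GVertex S | (∃ j, z.1 = .hyp j) ∨ (∃ i ∈ Q₁, z.1 = .elt i) ∨
            (∃ i j, z.1 = .sub i j)},
         {z : GVertex S | (∃ j, z.1 = .copy j) ∨ (∃ i ∈ Q₂, z.1 = .elt i)},
         {(⟨.w, trivial⟩ : GVertex S)} ] := by
  obtain ⟨hQu, hQd, hQint⟩ := hcol
  have hQd' := Set.disjoint_left.mp hQd
  have hn0 : n - 1 < n := by omega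
  set jn : Fin n := ⟨n - 1, hn0⟩ with hjn
  have hSl : S jn = Set.univ := hSlast
  set A0 : Set (GVertex S) := {(⟨.v, trivial⟩ : GVertex S)} with hA0
  set A1 : Set (GVertex S) := {z : GVertex S | z.1 = .qstar ∨ z.1 = .u1 ∨ z.1 = .u2} with hA1
  set A2 : Set (GVertex S) := {z : GVertex S | (∃ j, z.1 = .hyp j) ∨ (∃ i ∈ Q₁, z.1 = .elt i) ∨
            (∃ i j, z.1 = .sub i j)} with hA2
  set A3 : Set (GVertex S) := {z : GVertex S | (∃ j, z.1 = .copy j) ∨ (∃ i ∈ Q₂, z.1 = .elt i)} with hA3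
  set A4 : Set (GVertex S) := {(⟨.w, trivial⟩ : GVertex S)} with hA4
  refine ⟨?_, ?_, ?_, ?_, ?_⟩
  · -- nonempty
    intro h
    fin_cases h
    · exact ⟨⟨.v, trivial⟩, rfl⟩
    · exact ⟨⟨.qstar, trivial⟩, Or.inl rfl⟩
    · exact ⟨⟨.hyp jn, trivial⟩, Or.inl ⟨jn, rfl⟩⟩
    · exact ⟨⟨.copy jn, trivial⟩, Or.inl ⟨jn, rfl⟩⟩
    · exact ⟨⟨.w, trivial⟩, rfl⟩
  · -- disjoint
    have d01 : Disjoint A0 A1 := by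
      rw [Set.disjoint_left]; intro z hz1 hz2
      rw [show z = ⟨.v, trivial⟩ from hz1] at hz2
      rcases hz2 with e | e | e <;> exact HVertex.noConfusion rfl rfl (heq_of_eq e)
    have d02 : Disjoint A0 A2 := by
      rw [Set.disjoint_left]; intro z hz1 hz2
      rw [show z = ⟨.v, trivial⟩ from hz1] at hz2
      rcases hz2 with ⟨j, e⟩ | ⟨i, hi, e⟩ | ⟨i, j, e⟩ <;> exact HVertex.noConfusion rfl rfl (heq_of_eq e)
    have d03 : Disjoint A0 A3 := by
      rw [Set.disjoint_left]; intro z hz1 hz2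
      rw [show z = ⟨.v, trivial⟩ from hz1] at hz2
      rcases hz2 with ⟨j, e⟩ | ⟨i, hi, e⟩ <;> exact HVertex.noConfusion rfl rfl (heq_of_eq e)
    have d04 : Disjoint A0 A4 := by
      rw [Set.disjoint_left]; intro z hz1 hz2
      rw [show z = ⟨.v, trivial⟩ from hz1] at hz2
      exact HVertex.noConfusion rfl rfl (heq_of_eq (congrArg Subtype.val hz2))
    have d12 : Disjoint A1 A2 := by
      rw [Set.disjoint_left]; intro z hz1 hz2
      rcases hz1 with e | e | e <;>
        rcases hz2 with ⟨j, e'⟩ | ⟨i, hi, e'⟩ | ⟨i, j, e'⟩ <;> rw [e] at e' <;>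
        exact HVertex.noConfusion rfl rfl (heq_of_eq e')
    have d13 : Disjoint A1 A3 := by
      rw [Set.disjoint_left]; intro z hz1 hz2
      rcases hz1 with e | e | e <;>
        rcases hz2 with ⟨j, e'⟩ | ⟨i, hi, e'⟩ <;> rw [e] at e' <;>
        exact HVertex.noConfusion rfl rfl (heq_of_eq e')
    have d14 : Disjoint A1 A4 := by
      rw [Set.disjoint_left]; intro z hz1 hz2
      rw [show z = ⟨.w, trivial⟩ from hz2] at hz1
      rcases hz1 with e | e | e <;> exact HVertex.noConfusion rfl rfl (heq_of_eq e)
    have d23 : Disjoint A2 A3 := by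
      rw [Set.disjoint_left]; intro z hz1 hz2
      rcases hz1 with ⟨j, e⟩ | ⟨i, hi, e⟩ | ⟨i, j, e⟩ <;>
        rcases hz2 with ⟨j', e'⟩ | ⟨i', hi', e'⟩ <;> rw [e] at e' <;>
        first
          | exact HVertex.noConfusion rfl rfl (heq_of_eq e')
          | (injection e' with h; subst h; exact hQd' hi hi')
    have d24 : Disjoint A2 A4 := by
      rw [Set.disjoint_left]; intro z hz1 hz2
      rw [show z = ⟨.w, trivial⟩ from hz2] at hz1
      rcases hz1 with ⟨j, e⟩ | ⟨i, hi, e⟩ | ⟨i, j, e⟩ <;> exact HVertex.noConfusion rfl rfl (heq_of_eq e)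
    have d34 : Disjoint A3 A4 := by
      rw [Set.disjoint_left]; intro z hz1 hz2
      rw [show z = ⟨.w, trivial⟩ from hz2] at hz1
      rcases hz1 with ⟨j, e⟩ | ⟨i, hi, e⟩ <;> exact HVertex.noConfusion rfl rfl (heq_of_eq e)
    intro h₁ h₂ hne
    fin_cases h₁ <;> fin_cases h₂ <;>
      first
        | exact absurd rfl hne
        | exact d01 | exact d02 | exact d03 | exact d04
        | exact d12 | exact d13 | exact d14
        | exact d23 | exact d24 | exact d34
        | exact d01.symm | exact d02.symm | exact d03.symm | exact d04.symm
        | exact d12.symm | exact d13.symm | exact d14.symm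
        | exact d23.symm | exact d24.symm | exact d34.symm
  · -- union
    ext z
    simp only [Set.mem_iUnion, Set.mem_univ, iff_true]
    obtain ⟨x, hx⟩ := z
    cases x with
    | elt i =>
      have hi : i ∈ Q₁ ∪ Q₂ := hQu ▸ Set.mem_univ i
      rcases hi with h | h
      · exact ⟨2, Or.inr (Or.inl ⟨i, h, rfl⟩)⟩
      · exact ⟨3, Or.inr ⟨i, h, rfl⟩⟩
    | hyp j => exact ⟨2, Or.inl ⟨j, rfl⟩⟩
    | copy j => exact ⟨3, Or.inl ⟨j, rfl⟩⟩
    | sub i j => exact ⟨2, Or.inr (Or.inr ⟨i, j, rfl⟩)⟩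
    | qstar => exact ⟨1, Or.inl rfl⟩
    | u1 => exact ⟨1, Or.inr (Or.inl rfl)⟩
    | u2 => exact ⟨1, Or.inr (Or.inr rfl)⟩
    | v => exact ⟨0, rfl⟩
    | w => exact ⟨4, rfl⟩
  · -- connected
    have c0 : ((GQS S).induce A0).Connected := by
      refine connected_hub _ _ ⟨⟨.v, trivial⟩, rfl⟩ fun z => ?_
      rw [show z = ⟨⟨.v, trivial⟩, rfl⟩ from Subtype.ext z.2]
    have c1 : ((GQS S).induce A1).Connected := by
      refine connected_hub _ _ ⟨⟨.qstar, trivial⟩, Or.inl rfl⟩ fun z => ?_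
      rcases z.2 with e | e | e
      · rw [show z = ⟨⟨.qstar, trivial⟩, Or.inl rfl⟩ from Subtype.ext (Subtype.ext e)]
      · rw [show z = ⟨⟨.u1, trivial⟩, Or.inr (Or.inl rfl)⟩ from Subtype.ext (Subtype.ext e)]
        exact (iadj (a := ⟨⟨.u1, trivial⟩, Or.inr (Or.inl rfl)⟩)
          (b := ⟨⟨.qstar, trivial⟩, Or.inl rfl⟩)
          (fun e => HVertex.noConfusion rfl rfl (heq_of_eq e)) (Or.inr trivial)).reachable
      · rw [show z = ⟨⟨.u2, trivial⟩, Or.inr (Or.inr rfl)⟩ from Subtype.ext (Subtype.ext e)]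
        exact (iadj (a := ⟨⟨.u2, trivial⟩, Or.inr (Or.inr rfl)⟩)
          (b := ⟨⟨.qstar, trivial⟩, Or.inl rfl⟩)
          (fun e => HVertex.noConfusion rfl rfl (heq_of_eq e)) (Or.inr trivial)).reachable
    have c2 : ((GQS S).induce A2).Connected := by
      refine connected_hub _ _ ⟨⟨.hyp jn, trivial⟩, Or.inl ⟨jn, rfl⟩⟩ fun z => ?_
      have step : ∀ (a b : ↥A2), a.1.1 ≠ b.1.1 →
          (baseAdj S a.1.1 b.1.1 ∨ baseAdj S b.1.1 a.1.1) →
          ((GQS S).induce A2).Reachable a b := fun a b h1 h2 => (iadj h1 h2).reachable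
      have helt : ∀ (i : Fin m) (hi : i ∈ Q₁),
          ((GQS S).induce A2).Reachable ⟨⟨.elt i, trivial⟩, Or.inr (Or.inl ⟨i, hi, rfl⟩)⟩
            ⟨⟨.hyp jn, trivial⟩, Or.inl ⟨jn, rfl⟩⟩ := by
        intro i hi
        have hio : (HVertex.sub i jn).OK S := by show i ∈ S jn; rw [hSl]; trivial
        exact (step ⟨⟨.elt i, trivial⟩, Or.inr (Or.inl ⟨i, hi, rfl⟩)⟩
            ⟨⟨.sub i jn, hio⟩, Or.inr (Or.inr ⟨i, jn, rfl⟩)⟩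
            (fun e => HVertex.noConfusion rfl rfl (heq_of_eq e)) (Or.inr rfl)).trans
          (step ⟨⟨.sub i jn, hio⟩, Or.inr (Or.inr ⟨i, jn, rfl⟩)⟩
            ⟨⟨.hyp jn, trivial⟩, Or.inl ⟨jn, rfl⟩⟩
            (fun e => HVertex.noConfusion rfl rfl (heq_of_eq e)) (Or.inl rfl))
      have rhyp : ∀ j : Fin n, ((GQS S).induce A2).Reachable ⟨⟨.hyp j, trivial⟩, Or.inl ⟨j, rfl⟩⟩
          ⟨⟨.hyp jn, trivial⟩, Or.inl ⟨jn, rfl⟩⟩ := by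
        intro j
        obtain ⟨i, hi1, hiS⟩ := (hQint j).1
        exact ((step ⟨⟨.hyp j, trivial⟩, Or.inl ⟨j, rfl⟩⟩
            ⟨⟨.sub i j, hiS⟩, Or.inr (Or.inr ⟨i, j, rfl⟩)⟩
            (fun e => HVertex.noConfusion rfl rfl (heq_of_eq e)) (Or.inr rfl)).trans
          (step ⟨⟨.sub i j, hiS⟩, Or.inr (Or.inr ⟨i, j, rfl⟩)⟩
            ⟨⟨.elt i, trivial⟩, Or.inr (Or.inl ⟨i, hi1, rfl⟩)⟩
            (fun e => HVertex.noConfusion rfl rfl (heq_of_eq e)) (Or.inl rfl))).trans (helt i hi1)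
      rcases z.2 with ⟨j, e⟩ | ⟨i, hi, e⟩ | ⟨i, j, e⟩
      · rw [show z = ⟨⟨.hyp j, trivial⟩, Or.inl ⟨j, rfl⟩⟩ from Subtype.ext (Subtype.ext e)]
        exact rhyp j
      · rw [show z = ⟨⟨.elt i, trivial⟩, Or.inr (Or.inl ⟨i, hi, rfl⟩)⟩ from
          Subtype.ext (Subtype.ext e)]
        exact helt i hi
      · have hok : (HVertex.sub i j).OK S := e ▸ z.1.2
        rw [show z = ⟨⟨.sub i j, hok⟩, Or.inr (Or.inr ⟨i, j, rfl⟩)⟩ from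
          Subtype.ext (Subtype.ext e)]
        exact (step ⟨⟨.sub i j, hok⟩, Or.inr (Or.inr ⟨i, j, rfl⟩)⟩
          ⟨⟨.hyp j, trivial⟩, Or.inl ⟨j, rfl⟩⟩
          (fun e => HVertex.noConfusion rfl rfl (heq_of_eq e)) (Or.inl rfl)).trans (rhyp j)
    have c3 : ((GQS S).induce A3).Connected := by
      refine connected_hub _ _ ⟨⟨.copy jn, trivial⟩, Or.inl ⟨jn, rfl⟩⟩ fun z => ?_
      have step : ∀ (a b : ↥A3), a.1.1 ≠ b.1.1 →
          (baseAdj S a.1.1 b.1.1 ∨ baseAdj S b.1.1 a.1.1) →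
          ((GQS S).induce A3).Reachable a b := fun a b h1 h2 => (iadj h1 h2).reachable
      have helt : ∀ (i : Fin m) (hi : i ∈ Q₂),
          ((GQS S).induce A3).Reachable ⟨⟨.elt i, trivial⟩, Or.inr ⟨i, hi, rfl⟩⟩
            ⟨⟨.copy jn, trivial⟩, Or.inl ⟨jn, rfl⟩⟩ := by
        intro i hi
        have hio : i ∈ S jn := by rw [hSl]; trivial
        exact step ⟨⟨.elt i, trivial⟩, Or.inr ⟨i, hi, rfl⟩⟩
          ⟨⟨.copy jn, trivial⟩, Or.inl ⟨jn, rfl⟩⟩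
          (fun e => HVertex.noConfusion rfl rfl (heq_of_eq e)) (Or.inl hio)
      rcases z.2 with ⟨j, e⟩ | ⟨i, hi, e⟩
      · rw [show z = ⟨⟨.copy j, trivial⟩, Or.inl ⟨j, rfl⟩⟩ from Subtype.ext (Subtype.ext e)]
        obtain ⟨i, hi2, hiS⟩ := (hQint j).2
        exact (step ⟨⟨.copy j, trivial⟩, Or.inl ⟨j, rfl⟩⟩
          ⟨⟨.elt i, trivial⟩, Or.inr ⟨i, hi2, rfl⟩⟩
          (fun e => HVertex.noConfusion rfl rfl (heq_of_eq e)) (Or.inr hiS)).trans (helt i hi2)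
      · rw [show z = ⟨⟨.elt i, trivial⟩, Or.inr ⟨i, hi, rfl⟩⟩ from Subtype.ext (Subtype.ext e)]
        exact helt i hi
    have c4 : ((GQS S).induce A4).Connected := by
      refine connected_hub _ _ ⟨⟨.w, trivial⟩, rfl⟩ fun z => ?_
      rw [show z = ⟨⟨.w, trivial⟩, rfl⟩ from Subtype.ext z.2]
    intro h
    fin_cases h
    exacts [c0, c1, c2, c3, c4]
  · -- adjacency
    have e01 : ∃ a ∈ A0, ∃ b ∈ A1, (GQS S).Adj a b :=
      ⟨⟨.v, trivial⟩, rfl, ⟨.u1, trivial⟩, Or.inr (Or.inl rfl),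
        gadj (fun e => HVertex.noConfusion rfl rfl (heq_of_eq e)) (Or.inr trivial)⟩
    have e12 : ∃ a ∈ A1, ∃ b ∈ A2, (GQS S).Adj a b :=
      ⟨⟨.u1, trivial⟩, Or.inr (Or.inl rfl), ⟨.hyp jn, trivial⟩, Or.inl ⟨jn, rfl⟩,
        gadj (fun e => HVertex.noConfusion rfl rfl (heq_of_eq e)) (Or.inl trivial)⟩
    have e23 : ∃ a ∈ A2, ∃ b ∈ A3, (GQS S).Adj a b :=
      ⟨⟨.hyp jn, trivial⟩, Or.inl ⟨jn, rfl⟩, ⟨.copy jn, trivial⟩, Or.inl ⟨jn, rfl⟩,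
        gadj (fun e => HVertex.noConfusion rfl rfl (heq_of_eq e)) (Or.inl trivial)⟩
    have e34 : ∃ a ∈ A3, ∃ b ∈ A4, (GQS S).Adj a b :=
      ⟨⟨.copy jn, trivial⟩, Or.inl ⟨jn, rfl⟩, ⟨.w, trivial⟩, rfl,
        gadj (fun e => HVertex.noConfusion rfl rfl (heq_of_eq e)) (Or.inr trivial)⟩
    have no02 : ¬ ∃ a ∈ A0, ∃ b ∈ A2, (GQS S).Adj a b := by
      rintro ⟨a, ha, b, hb, hab⟩
      have h2 := gadj_elim hab
      rw [show a = ⟨.v, trivial⟩ from ha] at h2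
      rcases hb with ⟨j, e⟩ | ⟨i, hi, e⟩ | ⟨i, j, e⟩ <;> rw [e] at h2 <;>
        exact h2.elim (fun h => h) (fun h => h)
    have no03 : ¬ ∃ a ∈ A0, ∃ b ∈ A3, (GQS S).Adj a b := by
      rintro ⟨a, ha, b, hb, hab⟩
      have h2 := gadj_elim hab
      rw [show a = ⟨.v, trivial⟩ from ha] at h2
      rcases hb with ⟨j, e⟩ | ⟨i, hi, e⟩ <;> rw [e] at h2 <;>
        exact h2.elim (fun h => h) (fun h => h)
    have no04 : ¬ ∃ a ∈ A0, ∃ b ∈ A4, (GQS S).Adj a b := by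
      rintro ⟨a, ha, b, hb, hab⟩
      have h2 := gadj_elim hab
      rw [show a = ⟨.v, trivial⟩ from ha, show b = ⟨.w, trivial⟩ from hb] at h2
      exact h2.elim (fun h => h) (fun h => h)
    have no13 : ¬ ∃ a ∈ A1, ∃ b ∈ A3, (GQS S).Adj a b := by
      rintro ⟨a, ha, b, hb, hab⟩
      have h2 := gadj_elim hab
      rcases ha with e | e | e <;> rcases hb with ⟨j, e'⟩ | ⟨i, hi, e'⟩ <;>
        rw [e, e'] at h2 <;> exact h2.elim (fun h => h) (fun h => h)
    have no14 : ¬ ∃ a ∈ A1, ∃ b ∈ A4, (GQS S).Adj a b := by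
      rintro ⟨a, ha, b, hb, hab⟩
      have h2 := gadj_elim hab
      rw [show b = ⟨.w, trivial⟩ from hb] at h2
      rcases ha with e | e | e <;> rw [e] at h2 <;>
        exact h2.elim (fun h => h) (fun h => h)
    have no24 : ¬ ∃ a ∈ A2, ∃ b ∈ A4, (GQS S).Adj a b := by
      rintro ⟨a, ha, b, hb, hab⟩
      have h2 := gadj_elim hab
      rw [show b = ⟨.w, trivial⟩ from hb] at h2
      rcases ha with ⟨j, e⟩ | ⟨i, hi, e⟩ | ⟨i, j, e⟩ <;> rw [e] at h2 <;>
        exact h2.elim (fun h => h) (fun h => h)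
    have padj : ∀ (a b : Fin 5), a.val + 1 = b.val → (SimpleGraph.pathGraph 5).Adj a b :=
      fun a b h => SimpleGraph.pathGraph_adj.mpr (Or.inl h)
    have pnadj : ∀ (a b : Fin 5), a.val + 1 ≠ b.val → b.val + 1 ≠ a.val →
        ¬ (SimpleGraph.pathGraph 5).Adj a b := by
      intro a b h1 h2 hadj
      rcases SimpleGraph.pathGraph_adj.mp hadj with h | h
      · exact h1 h
      · exact h2 h
    intro h₁ h₂ hne
    fin_cases h₁ <;> fin_cases h₂
    · exact absurd rfl hne
    · exact iff_of_true e01 (padj _ _ rfl)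
    · exact iff_of_false no02 (pnadj _ _ (by decide) (by decide))
    · exact iff_of_false no03 (pnadj _ _ (by decide) (by decide))
    · exact iff_of_false no04 (pnadj _ _ (by decide) (by decide))
    · exact iff_of_true (e01.elim fun a ⟨ha, b, hb, hab⟩ => ⟨b, hb, a, ha, hab.symm⟩)
        (SimpleGraph.pathGraph_adj.mpr (Or.inr rfl))
    · exact absurd rfl hne
    · exact iff_of_true e12 (padj _ _ rfl)
    · exact iff_of_false no13 (pnadj _ _ (by decide) (by decide))
    · exact iff_of_false no14 (pnadj _ _ (by decide) (by decide))
    · exact iff_of_false (fun ⟨a, ha, b, hb, hab⟩ => no02 ⟨b, hb, a, ha, hab.symm⟩)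
        (pnadj _ _ (by decide) (by decide))
    · exact iff_of_true (e12.elim fun a ⟨ha, b, hb, hab⟩ => ⟨b, hb, a, ha, hab.symm⟩)
        (SimpleGraph.pathGraph_adj.mpr (Or.inr rfl))
    · exact absurd rfl hne
    · exact iff_of_true e23 (padj _ _ rfl)
    · exact iff_of_false no24 (pnadj _ _ (by decide) (by decide))
    · exact iff_of_false (fun ⟨a, ha, b, hb, hab⟩ => no03 ⟨b, hb, a, ha, hab.symm⟩)
        (pnadj _ _ (by decide) (by decide))
    · exact iff_of_false (fun ⟨a, ha, b, hb, hab⟩ => no13 ⟨b, hb, a, ha, hab.symm⟩)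
        (pnadj _ _ (by decide) (by decide))
    · exact iff_of_true (e23.elim fun a ⟨ha, b, hb, hab⟩ => ⟨b, hb, a, ha, hab.symm⟩)
        (SimpleGraph.pathGraph_adj.mpr (Or.inr rfl))
    · exact absurd rfl hne
    · exact iff_of_true e34 (padj _ _ rfl)
    · exact iff_of_false (fun ⟨a, ha, b, hb, hab⟩ => no04 ⟨b, hb, a, ha, hab.symm⟩)
        (pnadj _ _ (by decide) (by decide))
    · exact iff_of_false (fun ⟨a, ha, b, hb, hab⟩ => no14 ⟨b, hb, a, ha, hab.symm⟩)
        (pnadj _ _ (by decide) (by decide))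
    · exact iff_of_false (fun ⟨a, ha, b, hb, hab⟩ => no24 ⟨b, hb, a, ha, hab.symm⟩)
        (pnadj _ _ (by decide) (by decide))
    · exact iff_of_true (e34.elim fun a ⟨ha, b, hb, hab⟩ => ⟨b, hb, a, ha, hab.symm⟩)
        (SimpleGraph.pathGraph_adj.mpr (Or.inr rfl))
    · exact absurd rfl hne
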